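/- Let X ⊆ ℂⁿ and Y ⊆ ℂ^d, and suppose φ : X → Y is a bi-α-Hölder homeomorphism. Then there exist α-Hölder maps φ̃ : ℂⁿ → ℂ^d and ψ̃ : ℂ^d → ℂⁿ extending φ and φ⁻¹ respectively, and the maps φ̂(x,y) = (x − ψ̃(y + φ̃(x)), y + φ̃(x)) and ψ̂(z,w) = (z + ψ̃(w), w − φ̃(z + ψ̃(w))) from ℂⁿ × ℂ^d to itself are α²-Hölder, mutually inverse, and φ̂ maps X × {0} onto {0} × Y. -/

import Mathlib

open Set Metric Bornology NNReal
open scoped ENNReal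

structure Snow (β : Type*) (r : ℝ≥0) where
  val : β

noncomputable def snowPMS (β : Type*) [PseudoMetricSpace β] (r : ℝ≥0) (h0 : 0 < r) (h1 : r ≤ 1) :
    PseudoMetricSpace (Snow β r) where
  dist x y := ((nndist x.val y.val ^ (r : ℝ) : ℝ≥0) : ℝ)
  dist_self x := by
    simp [NNReal.zero_rpow (by exact_mod_cast h0.ne' : (r:ℝ) ≠ 0)]
  dist_comm x y := by
    show ((nndist x.val y.val ^ (r : ℝ) : ℝ≥0) : ℝ) = ((nndist y.val x.val ^ (r : ℝ) : ℝ≥0) : ℝ)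
    rw [nndist_comm]
  dist_triangle x y z := by
    have h1' : (r : ℝ) ≤ 1 := by exact_mod_cast h1
    have tri := nndist_triangle x.val y.val z.val
    have step1 : nndist x.val z.val ^ (r:ℝ) ≤ (nndist x.val y.val + nndist y.val z.val) ^ (r:ℝ) :=
      NNReal.rpow_le_rpow tri r.2
    have step2 := NNReal.rpow_add_le_add_rpow (nndist x.val y.val) (nndist y.val z.val) r.2 h1'
    exact_mod_cast step1.trans step2

theorem holder_extend_pi {β : Type*} [PseudoMetricSpace β] {ι : Type*} [Fintype ι]
    {f : β → ι → ℝ} {s : Set β} {C r : ℝ≥0} (h0 : 0 < r) (h1 : r ≤ 1)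
    (hf : HolderOnWith C r f s) :
    ∃ g : β → ι → ℝ, HolderWith C r g ∧ EqOn f g s := by
  letI I := snowPMS β r h0 h1
  have hed : ∀ x y : Snow β r, edist x y = edist x.val y.val ^ (r : ℝ) := by
    intro x y
    rw [edist_dist]
    show ENNReal.ofReal ((nndist x.val y.val ^ (r : ℝ) : ℝ≥0) : ℝ) = _
    rw [ENNReal.ofReal_coe_nnreal, edist_nndist]
    exact ENNReal.coe_rpow_of_nonneg _ r.2
  have hf' : LipschitzOnWith C (fun x : Snow β r => f x.val) (Snow.val ⁻¹' s) := by
    intro x hx y hy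
    rw [hed]
    exact hf x.val hx y.val hy
  obtain ⟨g, hg, hEq⟩ := hf'.extend_pi
  refine ⟨fun x => g ⟨x⟩, fun x y => ?_, fun x hx => hEq (show x ∈ s from hx)⟩
  have := hg ⟨x⟩ ⟨y⟩
  rwa [hed] at this

theorem holder_extend_euclid {β : Type*} [PseudoMetricSpace β] {m : ℕ}
    {f : β → EuclideanSpace ℂ (Fin m)} {s : Set β} {C r : ℝ≥0} (h0 : 0 < r) (h1 : r ≤ 1)
    (hf : HolderOnWith C r f s) :
    ∃ (C' : ℝ≥0) (g : β → EuclideanSpace ℂ (Fin m)), HolderWith C' r g ∧ EqOn f g s := by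
  classical
  set coords : EuclideanSpace ℂ (Fin m) → (Fin m × Fin 2) → ℝ :=
    fun y p => if p.2 = 0 then (y p.1).re else (y p.1).im with hcoords_def
  have hcoord_le : ∀ (y z : EuclideanSpace ℂ (Fin m)) (i : Fin m),
      dist (y i) (z i) ≤ dist y z := by
    intro y z i
    have h1' : dist (WithLp.equiv 2 (Fin m → ℂ) y) (WithLp.equiv 2 (Fin m → ℂ) z) ≤ dist y z := by
      simpa using (PiLp.lipschitzWith_ofLp 2 (fun _ : Fin m => ℂ)).dist_le_mul y z
    exact le_trans (dist_le_pi_dist (WithLp.equiv 2 (Fin m → ℂ) y) (WithLp.equiv 2 (Fin m → ℂ) z) i) h1'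
  have hcoords : LipschitzWith 1 coords := by
    apply LipschitzWith.of_dist_le_mul
    intro y z
    rw [NNReal.coe_one, one_mul, dist_pi_le_iff dist_nonneg]
    intro p
    rcases eq_or_ne p.2 0 with h | h
    · simp only [hcoords_def, if_pos h]
      calc dist (y p.1).re (z p.1).re ≤ dist (y p.1) (z p.1) := by
            rw [Real.dist_eq, Complex.dist_eq, ← Complex.sub_re]
            exact Complex.abs_re_le_norm _
        _ ≤ dist y z := hcoord_le y z p.1
    · simp only [hcoords_def, if_neg h]
      calc dist (y p.1).im (z p.1).im ≤ dist (y p.1) (z p.1) := by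
            rw [Real.dist_eq, Complex.dist_eq, ← Complex.sub_im]
            exact Complex.abs_im_le_norm _
        _ ≤ dist y z := hcoord_le y z p.1
  set recon : ((Fin m × Fin 2) → ℝ) → EuclideanSpace ℂ (Fin m) :=
    fun u => (WithLp.equiv 2 (Fin m → ℂ)).symm (fun i => (⟨u (i, 0), u (i, 1)⟩ : ℂ)) with hrecon_def
  have hpair : LipschitzWith 2
      (fun (u : (Fin m × Fin 2) → ℝ) (i : Fin m) => (⟨u (i, 0), u (i, 1)⟩ : ℂ)) := by
    apply LipschitzWith.of_dist_le_mul
    intro u v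
    have h2 : ((2 : ℝ≥0) : ℝ) * dist u v = 2 * dist u v := by norm_num
    rw [h2, dist_pi_le_iff (by positivity)]
    intro i
    have habs : dist ((⟨u (i,0), u (i,1)⟩ : ℂ)) ((⟨v (i,0), v (i,1)⟩ : ℂ)) ≤
        |u (i,0) - v (i,0)| + |u (i,1) - v (i,1)| := by
      rw [Complex.dist_eq]
      refine (Complex.norm_le_abs_re_add_abs_im _).trans ?_
      simp [Complex.sub_re, Complex.sub_im]
    refine habs.trans ?_
    have h0' := dist_le_pi_dist u v (i, 0)
    have h1'' := dist_le_pi_dist u v (i, 1)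
    rw [Real.dist_eq] at h0' h1''
    calc |u (i,0) - v (i,0)| + |u (i,1) - v (i,1)| ≤ dist u v + dist u v := add_le_add h0' h1''
      _ = 2 * dist u v := (two_mul _).symm
  have hsymm := (PiLp.antilipschitzWith_ofLp 2 (fun _ : Fin m => ℂ)).to_rightInverse
      (WithLp.equiv 2 (Fin m → ℂ)).apply_symm_apply
  have hrecon_coords : ∀ y, recon (coords y) = y := by
    intro y
    ext i
    apply Complex.ext <;>
      simp [hrecon_def, hcoords_def, show (1 : Fin 2) ≠ 0 by decide]
  -- Hölder of coords ∘ f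
  have hcf : HolderOnWith C r (fun x => coords (f x)) s := by
    intro x hx y hy
    refine le_trans (hcoords (f x) (f y)) ?_
    rw [ENNReal.coe_one, one_mul]
    exact hf x hx y hy
  obtain ⟨g0, hg0, hEq0⟩ := holder_extend_pi h0 h1 hcf
  obtain ⟨KR, hKR⟩ : ∃ K : ℝ≥0, LipschitzWith K recon := ⟨_, hsymm.comp hpair⟩
  refine ⟨KR * C, fun x => recon (g0 x), fun x y => ?_, fun x hx => ?_⟩
  · calc edist (recon (g0 x)) (recon (g0 y)) ≤ (KR : ℝ≥0∞) * edist (g0 x) (g0 y) := hKR _ _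
      _ ≤ (KR : ℝ≥0∞) * ((C : ℝ≥0∞) * edist x y ^ (r : ℝ)) := mul_le_mul_right (hg0 x y) _
      _ = ((KR * C : ℝ≥0) : ℝ≥0∞) * edist x y ^ (r : ℝ) := by rw [ENNReal.coe_mul, mul_assoc]
  · exact (hrecon_coords (f x)).symm.trans (congrArg recon (hEq0 hx))

theorem rpow_le_aux {e D : ℝ≥0∞} (heD : e ≤ D) (hD : D ≠ ⊤) {s t : ℝ} (hs : 0 ≤ s)
    (hst : s ≤ t) : e ^ t ≤ D ^ (t - s) * e ^ s := by
  rcases eq_or_ne e 0 with rfl | he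
  · rcases (hs.trans hst).eq_or_lt with ht | ht
    · have hs0 : s = 0 := le_antisymm (hst.trans ht.symm.le) hs
      rw [← ht, hs0]
      simp
    · rw [ENNReal.zero_rpow_of_pos ht]
      exact zero_le
  · have he' : e ≠ ⊤ := (heD.trans_lt (lt_top_iff_ne_top.mpr hD)).ne
    have hsplit : e ^ t = e ^ (t - s) * e ^ s := by
      rw [← ENNReal.rpow_add (t - s) s he he', sub_add_cancel]
    rw [hsplit]
    exact mul_le_mul_left (ENNReal.rpow_le_rpow heD (by linarith)) _

theorem holder_core {A B : Type*} [SeminormedAddCommGroup A] [SeminormedAddCommGroup B]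
    {α : ℝ≥0} (hα0 : 0 < α) (hα1 : α ≤ 1) {C' : ℝ≥0}
    {f : A → B} {g : B → A} (hf : HolderWith C' α f) (hg : HolderWith C' α g)
    {S : Set (A × B)} (hS : IsBounded S) :
    ∃ C'' : ℝ≥0, HolderOnWith C'' (α * α)
      (fun p : A × B => (p.1 - g (p.2 + f p.1), p.2 + f p.1)) S := by
  have hα0R : (0:ℝ) < (α:ℝ) := hα0
  have hα1R : (α:ℝ) ≤ 1 := hα1
  set D := EMetric.diam S with hDdef
  have hD : D ≠ ⊤ := hS.ediam_ne_top
  set K1 : ℝ≥0∞ := D ^ (1 - (α:ℝ)) + (C' : ℝ≥0∞) with hK1def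
  set K2 : ℝ≥0∞ := (C' : ℝ≥0∞) * K1 ^ (α:ℝ) with hK2def
  set K3 : ℝ≥0∞ := D ^ (1 - (α:ℝ)*(α:ℝ)) + K2 with hK3def
  set K4 : ℝ≥0∞ := K1 * D ^ ((α:ℝ) - (α:ℝ)*(α:ℝ)) with hK4def
  have hK1top : K1 ≠ ⊤ :=
    ENNReal.add_ne_top.mpr ⟨ENNReal.rpow_ne_top_of_nonneg (by linarith) hD, ENNReal.coe_ne_top⟩
  have hK2top : K2 ≠ ⊤ :=
    ENNReal.mul_ne_top ENNReal.coe_ne_top (ENNReal.rpow_ne_top_of_nonneg hα0R.le hK1top)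
  have hK3top : K3 ≠ ⊤ :=
    ENNReal.add_ne_top.mpr ⟨ENNReal.rpow_ne_top_of_nonneg (by nlinarith) hD, hK2top⟩
  have hK4top : K4 ≠ ⊤ :=
    ENNReal.mul_ne_top hK1top (ENNReal.rpow_ne_top_of_nonneg (by nlinarith) hD)
  have hsub : ∀ (a c b dd : A), edist (a - b) (c - dd) ≤ edist a c + edist b dd := by
    intro a c b dd
    simpa [sub_eq_add_neg, edist_neg_neg] using edist_add_add_le a (-b) c (-dd)
  refine ⟨(max K3 K4).toNNReal, fun p hp q hq => ?_⟩
  set e := edist p q with hedef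
  have heD : e ≤ D := EMetric.edist_le_diam_of_mem hp hq
  have he1 : edist p.1 q.1 ≤ e := by rw [hedef, Prod.edist_eq]; exact le_max_left _ _
  have he2 : edist p.2 q.2 ≤ e := by rw [hedef, Prod.edist_eq]; exact le_max_right _ _
  have hu : edist (p.2 + f p.1) (q.2 + f q.1) ≤ K1 * e ^ (α:ℝ) := by
    calc edist (p.2 + f p.1) (q.2 + f q.1) ≤ edist p.2 q.2 + edist (f p.1) (f q.1) :=
          edist_add_add_le _ _ _ _
      _ ≤ e + (C' : ℝ≥0∞) * edist p.1 q.1 ^ (α:ℝ) := add_le_add he2 (hf p.1 q.1)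
      _ ≤ D ^ (1 - (α:ℝ)) * e ^ (α:ℝ) + (C':ℝ≥0∞) * e ^ (α:ℝ) := by
          refine add_le_add ?_ (mul_le_mul_right (ENNReal.rpow_le_rpow he1 hα0R.le) _)
          simpa [ENNReal.rpow_one] using
            rpow_le_aux (s := (α:ℝ)) (t := 1) heD hD hα0R.le hα1R
      _ = K1 * e ^ (α:ℝ) := by rw [hK1def, add_mul]
  have hgu : edist (g (p.2 + f p.1)) (g (q.2 + f q.1)) ≤ K2 * e ^ ((α:ℝ)*(α:ℝ)) := by
    calc edist (g (p.2 + f p.1)) (g (q.2 + f q.1))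
        ≤ (C':ℝ≥0∞) * edist (p.2 + f p.1) (q.2 + f q.1) ^ (α:ℝ) := hg _ _
      _ ≤ (C':ℝ≥0∞) * (K1 * e ^ (α:ℝ)) ^ (α:ℝ) :=
          mul_le_mul_right (ENNReal.rpow_le_rpow hu hα0R.le) _
      _ = K2 * e ^ ((α:ℝ)*(α:ℝ)) := by
          rw [ENNReal.mul_rpow_of_nonneg _ _ hα0R.le, ← ENNReal.rpow_mul, hK2def, mul_assoc]
  have hc1 : edist (p.1 - g (p.2 + f p.1)) (q.1 - g (q.2 + f q.1)) ≤ K3 * e ^ ((α:ℝ)*(α:ℝ)) := by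
    calc edist (p.1 - g (p.2 + f p.1)) (q.1 - g (q.2 + f q.1))
        ≤ edist p.1 q.1 + edist (g (p.2 + f p.1)) (g (q.2 + f q.1)) := hsub _ _ _ _
      _ ≤ e + K2 * e ^ ((α:ℝ)*(α:ℝ)) := add_le_add he1 hgu
      _ ≤ D ^ (1 - (α:ℝ)*(α:ℝ)) * e ^ ((α:ℝ)*(α:ℝ)) + K2 * e ^ ((α:ℝ)*(α:ℝ)) := by
          refine add_le_add ?_ le_rfl
          simpa [ENNReal.rpow_one] using
            rpow_le_aux (s := (α:ℝ)*(α:ℝ)) (t := 1) heD hD (by positivity) (by nlinarith)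
      _ = K3 * e ^ ((α:ℝ)*(α:ℝ)) := by rw [hK3def, add_mul]
  have hc2 : edist (p.2 + f p.1) (q.2 + f q.1) ≤ K4 * e ^ ((α:ℝ)*(α:ℝ)) := by
    refine hu.trans ?_
    rw [hK4def, mul_assoc]
    exact mul_le_mul_right
      (rpow_le_aux (s := (α:ℝ)*(α:ℝ)) (t := (α:ℝ)) heD hD (by positivity) (by nlinarith)) _
  have hmaxtop : max K3 K4 ≠ ⊤ := by
    rw [max_def]
    split <;> assumption
  calc edist ((p.1 - g (p.2 + f p.1), p.2 + f p.1)) ((q.1 - g (q.2 + f q.1), q.2 + f q.1))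
      ≤ max K3 K4 * e ^ ((α:ℝ)*(α:ℝ)) := by
        rw [Prod.edist_eq]
        exact max_le (hc1.trans (mul_le_mul_left (le_max_left _ _) _))
          (hc2.trans (mul_le_mul_left (le_max_right _ _) _))
    _ = ((max K3 K4).toNNReal : ℝ≥0∞) * e ^ ((α * α : ℝ≥0) : ℝ) := by
        rw [ENNReal.coe_toNNReal hmaxtop, NNReal.coe_mul]

/-- Given a bi-α-Hölder homeomorphism `φ : X → Y` (with inverse `ψ`) between `X ⊆ ℂⁿ` and
`Y ⊆ ℂ^d`, there are α-Hölder extensions `φ̃ : ℂⁿ → ℂ^d` and `ψ̃ : ℂ^d → ℂⁿ` of `φ` and `ψ`,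
such that the maps `Φ(x,y) = (x − ψ̃(y + φ̃ x), y + φ̃ x)` and
`Ψ(z,w) = (z + ψ̃ w, w − φ̃(z + ψ̃ w))` of `ℂⁿ × ℂ^d` are mutually inverse, `α²`-Hölder
(on bounded sets), and `Φ` maps `X × {0}` onto `{0} × Y`. -/
theorem stmt_3 {n d : ℕ}
    (X : Set (EuclideanSpace ℂ (Fin n))) (Y : Set (EuclideanSpace ℂ (Fin d)))
    (α : ℝ≥0) (hα0 : 0 < α) (hα1 : α ≤ 1) (C : ℝ≥0)
    (φ : EuclideanSpace ℂ (Fin n) → EuclideanSpace ℂ (Fin d))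
    (ψ : EuclideanSpace ℂ (Fin d) → EuclideanSpace ℂ (Fin n))
    (hφY : MapsTo φ X Y) (hψX : MapsTo ψ Y X)
    (hli : ∀ x ∈ X, ψ (φ x) = x) (hri : ∀ y ∈ Y, φ (ψ y) = y)
    (hφH : HolderOnWith C α φ X) (hψH : HolderOnWith C α ψ Y) :
    ∃ (C' : ℝ≥0) (φt : EuclideanSpace ℂ (Fin n) → EuclideanSpace ℂ (Fin d))
      (ψt : EuclideanSpace ℂ (Fin d) → EuclideanSpace ℂ (Fin n)),
      HolderWith C' α φt ∧ HolderWith C' α ψt ∧ EqOn φt φ X ∧ EqOn ψt ψ Y ∧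
      (let Φ : EuclideanSpace ℂ (Fin n) × EuclideanSpace ℂ (Fin d) →
          EuclideanSpace ℂ (Fin n) × EuclideanSpace ℂ (Fin d) :=
        fun p => (p.1 - ψt (p.2 + φt p.1), p.2 + φt p.1)
      let Ψ : EuclideanSpace ℂ (Fin n) × EuclideanSpace ℂ (Fin d) →
          EuclideanSpace ℂ (Fin n) × EuclideanSpace ℂ (Fin d) :=
        fun q => (q.1 + ψt q.2, q.2 - φt (q.1 + ψt q.2))
      Function.LeftInverse Ψ Φ ∧ Function.RightInverse Ψ Φ ∧
        Φ '' (X ×ˢ ({0} : Set (EuclideanSpace ℂ (Fin d)))) =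
          ({0} : Set (EuclideanSpace ℂ (Fin n))) ×ˢ Y ∧
        ∀ S : Set (EuclideanSpace ℂ (Fin n) × EuclideanSpace ℂ (Fin d)), IsBounded S →
          ∃ C'' : ℝ≥0, HolderOnWith C'' (α * α) Φ S ∧ HolderOnWith C'' (α * α) Ψ S) := by
  obtain ⟨Ca, φt, hφtH, hφeq⟩ := holder_extend_euclid hα0 hα1 hφH
  obtain ⟨Cb, ψt, hψtH, hψeq⟩ := holder_extend_euclid hα0 hα1 hψH
  have hφt : HolderWith (max Ca Cb) α φt := fun x y =>
    (hφtH x y).trans (mul_le_mul_left (ENNReal.coe_le_coe.mpr (le_max_left _ _)) _)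
  have hψt : HolderWith (max Ca Cb) α ψt := fun x y =>
    (hψtH x y).trans (mul_le_mul_left (ENNReal.coe_le_coe.mpr (le_max_right _ _)) _)
  have hLI : Function.LeftInverse
      (fun q : EuclideanSpace ℂ (Fin n) × EuclideanSpace ℂ (Fin d) =>
        (q.1 + ψt q.2, q.2 - φt (q.1 + ψt q.2)))
      (fun p : EuclideanSpace ℂ (Fin n) × EuclideanSpace ℂ (Fin d) =>
        (p.1 - ψt (p.2 + φt p.1), p.2 + φt p.1)) := by
    rintro ⟨x, y⟩
    show (x - ψt (y + φt x) + ψt (y + φt x),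
      (y + φt x) - φt (x - ψt (y + φt x) + ψt (y + φt x))) = (x, y)
    have h1 : x - ψt (y + φt x) + ψt (y + φt x) = x := by abel
    rw [h1]
    have h2 : y + φt x - φt x = y := by abel
    rw [h2]
  have hRI : Function.RightInverse
      (fun q : EuclideanSpace ℂ (Fin n) × EuclideanSpace ℂ (Fin d) =>
        (q.1 + ψt q.2, q.2 - φt (q.1 + ψt q.2)))
      (fun p : EuclideanSpace ℂ (Fin n) × EuclideanSpace ℂ (Fin d) =>
        (p.1 - ψt (p.2 + φt p.1), p.2 + φt p.1)) := by
    rintro ⟨z, w⟩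
    show (z + ψt w - ψt (w - φt (z + ψt w) + φt (z + ψt w)),
      w - φt (z + ψt w) + φt (z + ψt w)) = (z, w)
    have h1 : w - φt (z + ψt w) + φt (z + ψt w) = w := by abel
    rw [h1]
    have h2 : z + ψt w - ψt w = z := by abel
    rw [h2]
  have hIm : (fun p : EuclideanSpace ℂ (Fin n) × EuclideanSpace ℂ (Fin d) =>
        (p.1 - ψt (p.2 + φt p.1), p.2 + φt p.1)) ''
        (X ×ˢ ({0} : Set (EuclideanSpace ℂ (Fin d)))) =
      ({0} : Set (EuclideanSpace ℂ (Fin n))) ×ˢ Y := by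
    ext ⟨a, b⟩
    simp only [Set.mem_image, Set.mem_prod, Set.mem_singleton_iff, Prod.exists]
    constructor
    · rintro ⟨x, y, ⟨hx, rfl⟩, heq⟩
      have hb : (0 : EuclideanSpace ℂ (Fin d)) + φt x = φ x := by
        rw [zero_add, ← hφeq hx]
      have hψφ : ψt (φ x) = x := by
        rw [← hψeq (hφY hx)]
        exact hli x hx
      have ha : x - ψt ((0 : EuclideanSpace ℂ (Fin d)) + φt x) = 0 := by
        rw [hb, hψφ, sub_self]
      injection heq with h1 h2
      constructor
      · rw [← h1]
        exact ha
      · rw [← h2, hb]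
        exact hφY hx
    · rintro ⟨rfl, hb⟩
      refine ⟨ψ b, 0, ⟨hψX hb, rfl⟩, ?_⟩
      have h1 : (0 : EuclideanSpace ℂ (Fin d)) + φt (ψ b) = b := by
        rw [zero_add, ← hφeq (hψX hb)]
        exact hri b hb
      show (ψ b - ψt (0 + φt (ψ b)), 0 + φt (ψ b)) = (0, b)
      rw [h1, ← hψeq hb, sub_self]
  have hBdd : ∀ S : Set (EuclideanSpace ℂ (Fin n) × EuclideanSpace ℂ (Fin d)), IsBounded S →
      ∃ C'' : ℝ≥0,
        HolderOnWith C'' (α * α) (fun p : EuclideanSpace ℂ (Fin n) × EuclideanSpace ℂ (Fin d) =>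
          (p.1 - ψt (p.2 + φt p.1), p.2 + φt p.1)) S ∧
        HolderOnWith C'' (α * α) (fun q : EuclideanSpace ℂ (Fin n) × EuclideanSpace ℂ (Fin d) =>
          (q.1 + ψt q.2, q.2 - φt (q.1 + ψt q.2))) S := by
    intro S hS
    obtain ⟨C1, hC1⟩ := holder_core hα0 hα1 hφt hψt hS
    have hS' : IsBounded (Prod.swap '' S) := by
      obtain ⟨c, hc⟩ := Metric.isBounded_iff.mp hS
      refine Metric.isBounded_iff.mpr ⟨c, ?_⟩
      rintro _ ⟨p, hp, rfl⟩ _ ⟨q, hq, rfl⟩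
      have hsw : dist p.swap q.swap = dist p q := by
        rw [Prod.dist_eq, Prod.dist_eq]
        exact max_comm _ _
      rw [hsw]
      exact hc hp hq
    obtain ⟨C2, hC2⟩ := holder_core hα0 hα1 hψt hφt hS'
    refine ⟨max C1 C2, fun p hp q hq => ?_, fun p hp q hq => ?_⟩
    · exact (hC1 p hp q hq).trans
        (mul_le_mul_left (ENNReal.coe_le_coe.mpr (le_max_left _ _)) _)
    · have hps : p.swap ∈ Prod.swap '' S := ⟨p, hp, rfl⟩
      have hqs : q.swap ∈ Prod.swap '' S := ⟨q, hq, rfl⟩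
      have hmain := hC2 p.swap hps q.swap hqs
      have hswap_e : edist p.swap q.swap = edist p q := by
        rw [Prod.edist_eq, Prod.edist_eq]
        exact max_comm _ _
      have key : edist (p.1 + ψt p.2, p.2 - φt (p.1 + ψt p.2))
            (q.1 + ψt q.2, q.2 - φt (q.1 + ψt q.2))
          = edist (p.swap.1 - φt (p.swap.2 + ψt p.swap.1), p.swap.2 + ψt p.swap.1)
            (q.swap.1 - φt (q.swap.2 + ψt q.swap.1), q.swap.2 + ψt q.swap.1) := by
        simp only [Prod.edist_eq, Prod.fst_swap, Prod.snd_swap]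
        exact max_comm _ _
      calc edist (p.1 + ψt p.2, p.2 - φt (p.1 + ψt p.2))
            (q.1 + ψt q.2, q.2 - φt (q.1 + ψt q.2))
          = _ := key
        _ ≤ (C2 : ℝ≥0∞) * edist p.swap q.swap ^ ((α * α : ℝ≥0) : ℝ) := hmain
        _ = (C2 : ℝ≥0∞) * edist p q ^ ((α * α : ℝ≥0) : ℝ) := by rw [hswap_e]
        _ ≤ (max C1 C2 : ℝ≥0∞) * edist p q ^ ((α * α : ℝ≥0) : ℝ) :=
            mul_le_mul_left (ENNReal.coe_le_coe.mpr (le_max_right _ _)) _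
  exact ⟨max Ca Cb, φt, ψt, hφt, hψt, hφeq.symm, hψeq.symm, hLI, hRI, hIm, hBdd⟩
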